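/- arXiv:1707.07801 — 5 statements merged into one kernel-verified Lean document; each statement's English description precedes it below -/
import Mathlib

section
/- Let F be a safe function and P a ground protocol that is F-increasing. Then P keeps its secret inputs: for every valid trace (N₁,s₁),…,(Nₙ,sₙ) of P from initial knowledge K₀ and every atom α such that F(α, K₀) ⊒ ⌜α⌝, ⌜α⌝ ≠ ⊥ and ¬(⌜K(I)⌝ ⊒ ⌜α⌝), the final intruder knowledge Kₙ = K₀ ∪ {s₁,…,sₙ} does not derive the secret, i.e. ¬(Kₙ ⊢ atom α). -/
/-- Messages: atoms, pairs, and encryptions (`enc m k` encrypts `m` with key `k`). -/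
inductive Msg (Atom : Type) : Type
  | atom : Atom → Msg Atom
  | pair : Msg Atom → Msg Atom → Msg Atom
  | enc  : Msg Atom → Atom → Msg Atom

namespace Msg

/-- The set `𝒜(m)` of atoms occurring in a message. -/
def atoms {Atom : Type} : Msg Atom → Set Atom
  | atom a => {a}
  | pair m₁ m₂ => m₁.atoms ∪ m₂.atoms
  | enc m k => m.atoms ∪ {k}

end Msg

/-- The set `𝒜(M)` of atoms occurring in a set of messages. -/
def atomsOf {Atom : Type} (M : Set (Msg Atom)) : Set Atom := ⋃ m ∈ M, m.atoms

/-- Dolev–Yao deduction `M ⊢ m`, relative to a set of keys and a key-inverse map. -/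
inductive Deduces {Atom : Type} (Key : Set Atom) (inv : Atom → Atom)
    (M : Set (Msg Atom)) : Msg Atom → Prop
  | ax {m} (h : m ∈ M) : Deduces Key inv M m
  | pair {m₁ m₂} (h₁ : Deduces Key inv M m₁) (h₂ : Deduces Key inv M m₂) :
      Deduces Key inv M (Msg.pair m₁ m₂)
  | fst {m₁ m₂} (h : Deduces Key inv M (Msg.pair m₁ m₂)) : Deduces Key inv M m₁
  | snd {m₁ m₂} (h : Deduces Key inv M (Msg.pair m₁ m₂)) : Deduces Key inv M m₂
  | enc {m k} (hk : k ∈ Key) (h : Deduces Key inv M m)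
      (hkey : Deduces Key inv M (Msg.atom k)) : Deduces Key inv M (Msg.enc m k)
  | dec {m k} (hk : k ∈ Key) (h : Deduces Key inv M (Msg.enc m k))
      (hkey : Deduces Key inv M (Msg.atom (inv k))) : Deduces Key inv M m

/-- A well-formed function on atoms and sets of messages. -/
def WellFormed {Atom L : Type} [CompleteLattice L]
    (F : Atom → Set (Msg Atom) → L) : Prop :=
  (∀ α : Atom, F α {Msg.atom α} = ⊥) ∧
  (∀ (α : Atom) (M : Set (Msg Atom)), α ∉ atomsOf M → F α M = ⊤) ∧
  (∀ (α : Atom) (M₁ M₂ : Set (Msg Atom)), F α (M₁ ∪ M₂) = F α M₁ ⊓ F α M₂)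

/-- A full-invariant-by-intruder function: deduction cannot lower the level of an
atom unless the intruder is authorized to know it (`⌜K(I)⌝ ⊒ ⌜α⌝`). -/
def FullInvariant {Atom L : Type} [CompleteLattice L] (Key : Set Atom) (inv : Atom → Atom)
    (lvl : Atom → L) (KI : L) (F : Atom → Set (Msg Atom) → L) : Prop :=
  ∀ (M : Set (Msg Atom)) (m : Msg Atom), Deduces Key inv M m →
    ∀ α ∈ m.atoms, F α M ≤ F α {m} ∨ lvl α ≤ KI

/-- A safe function: well-formed and full-invariant-by-intruder. -/
def Safe {Atom L : Type} [CompleteLattice L] (Key : Set Atom) (inv : Atom → Atom)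
    (lvl : Atom → L) (KI : L) (F : Atom → Set (Msg Atom) → L) : Prop :=
  WellFormed F ∧ FullInvariant Key inv lvl KI F

/-- A ground protocol `P` is `F`-increasing: for each step `(N, s)` and each atom `α` of `s`,
`F(α, s) ⊒ ⌜α⌝ ⊓ F(α, N)`. -/
def Increasing {Atom L : Type} [CompleteLattice L] (lvl : Atom → L)
    (F : Atom → Set (Msg Atom) → L) (P : Set (Set (Msg Atom) × Msg Atom)) : Prop :=
  ∀ st ∈ P, ∀ α ∈ (Prod.snd st).atoms, lvl α ⊓ F α st.1 ≤ F α {st.2}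

/-- The intruder knowledge `Kᵢ = K₀ ∪ {s₁, …, sᵢ}` after the first `i` steps of a trace. -/
def knowAfter {Atom : Type} (K₀ : Set (Msg Atom))
    (tr : List (Set (Msg Atom) × Msg Atom)) (i : ℕ) : Set (Msg Atom) :=
  K₀ ∪ { m | ∃ st ∈ tr.take i, st.2 = m }

/-- A valid trace of protocol `P` from initial knowledge `K₀`: every step belongs to `P`
and each received message of step `i+1` is deducible from `Kᵢ`. -/
def ValidTrace {Atom : Type} (Key : Set Atom) (inv : Atom → Atom)
    (P : Set (Set (Msg Atom) × Msg Atom)) (K₀ : Set (Msg Atom))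
    (tr : List (Set (Msg Atom) × Msg Atom)) : Prop :=
  ∀ (i : ℕ) (hi : i < tr.length), tr.get ⟨i, hi⟩ ∈ P ∧
    ∀ m ∈ (tr.get ⟨i, hi⟩).1, Deduces Key inv (knowAfter K₀ tr i) m


private lemma le_F_of_finite {Atom L : Type} [CompleteLattice L]
    (F : Atom → Set (Msg Atom) → L) (hwf : WellFormed F)
    (α : Atom) (c : L) (M : Set (Msg Atom)) (hfin : M.Finite)
    (h : ∀ m ∈ M, c ≤ F α {m}) : c ≤ F α M := by
  refine Set.Finite.induction_on
    (motive := fun S _ => (∀ m ∈ S, c ≤ F α {m}) → c ≤ F α S) M hfin ?_ ?_ h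
  · intro _
    have : F α (∅ : Set (Msg Atom)) = ⊤ := by
      apply hwf.2.1
      simp [atomsOf]
    simp [this]
  · intro m S _ _ ih h
    have hins : (insert m S : Set (Msg Atom)) = {m} ∪ S := by
      ext x; simp [Set.insert_def]
    rw [hins, hwf.2.2]
    exact le_inf (h m (by simp)) (ih fun x hx => h x (Set.mem_insert_of_mem _ hx))

private lemma knowAfter_succ {Atom : Type} (K₀ : Set (Msg Atom))
    (tr : List (Set (Msg Atom) × Msg Atom)) (i : ℕ) (hi : i < tr.length) :
    knowAfter K₀ tr (i + 1) = knowAfter K₀ tr i ∪ {(tr.get ⟨i, hi⟩).2} := by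
  unfold knowAfter
  have htake : tr.take (i + 1) = tr.take i ++ [tr.get ⟨i, hi⟩] := by
    rw [List.take_succ, List.getElem?_eq_getElem hi]; rfl
  ext x
  simp only [htake, Set.mem_union, Set.mem_setOf_eq, List.mem_append, List.mem_singleton,
    Set.mem_singleton_iff]
  constructor
  · rintro (h | ⟨st, (hst | hst), rfl⟩)
    · exact Or.inl (Or.inl h)
    · exact Or.inl (Or.inr ⟨st, hst, rfl⟩)
    · subst hst; exact Or.inr rfl
  · rintro ((h | ⟨st, hst, rfl⟩) | rfl)
    · exact Or.inl h
    · exact Or.inr ⟨st, Or.inl hst, rfl⟩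
    · exact Or.inr ⟨_, Or.inr rfl, rfl⟩

/-- **Secrecy in increasing protocols.** If `F` is safe and the ground protocol `P`
is `F`-increasing, then `P` keeps its secret inputs: along any valid trace, an atom
whose level is maintained by the initial knowledge (`F(α,K₀) ⊒ ⌜α⌝`), is a real secret
(`⌜α⌝ ≠ ⊥`) and is not granted to the intruder (`¬(⌜K(I)⌝ ⊒ ⌜α⌝)`) is never deduced. -/
theorem secrecy_in_increasing_protocols
    {Atom L : Type} [Countable Atom] [CompleteLattice L]
    (Key : Set Atom) (inv : Atom → Atom)
    (hinv : ∀ k ∈ Key, inv k ∈ Key ∧ inv (inv k) = k)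
    (lvl : Atom → L) (KI : L)
    (F : Atom → Set (Msg Atom) → L) (hF : Safe Key inv lvl KI F)
    (P : Set (Set (Msg Atom) × Msg Atom)) (hPfin : ∀ st ∈ P, st.1.Finite)
    (hInc : Increasing lvl F P)
    (K₀ : Set (Msg Atom)) (tr : List (Set (Msg Atom) × Msg Atom))
    (htr : ValidTrace Key inv P K₀ tr)
    (α : Atom) (hα₀ : lvl α ≤ F α K₀) (hα₁ : lvl α ≠ ⊥) (hα₂ : ¬ lvl α ≤ KI) :
    ¬ Deduces Key inv (knowAfter K₀ tr tr.length) (Msg.atom α) := by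
  obtain ⟨hwf, hfi⟩ := hF
  -- main invariant
  have key : ∀ i, i ≤ tr.length → lvl α ≤ F α (knowAfter K₀ tr i) := by
    intro i
    induction i with
    | zero =>
        intro _
        have : knowAfter K₀ tr 0 = K₀ := by
          unfold knowAfter; simp
        rw [this]; exact hα₀
    | succ i ih =>
        intro hi
        have hi' : i < tr.length := hi
        have hih := ih (le_of_lt hi')
        obtain ⟨hmem, hded⟩ := htr i hi'
        set st := tr.get ⟨i, hi'⟩ with hst
        have hstep : lvl α ≤ F α {st.2} := by
          by_cases hαs : α ∈ st.2.atoms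
          · have hN : lvl α ≤ F α st.1 := by
              apply le_F_of_finite F hwf α _ _ (hPfin st hmem)
              intro m hm
              by_cases hαm : α ∈ m.atoms
              · rcases hfi _ m (hded m hm) α hαm with h | h
                · exact le_trans hih h
                · exact absurd h hα₂
              · have : F α {m} = ⊤ := by
                  apply hwf.2.1
                  simpa [atomsOf] using hαm
                simp [this]
            calc lvl α = lvl α ⊓ lvl α := (inf_idem _).symm
              _ ≤ lvl α ⊓ F α st.1 := inf_le_inf_left _ hN
              _ ≤ F α {st.2} := hInc st hmem α hαs
          · have : F α {st.2} = ⊤ := by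
              apply hwf.2.1
              simpa [atomsOf] using hαs
            simp [this]
        rw [knowAfter_succ K₀ tr i hi', hwf.2.2]
        exact le_inf hih hstep
  intro hded
  rcases hfi _ _ hded α (by simp [Msg.atoms]) with h | h
  · have hb : F α {Msg.atom α} = ⊥ := hwf.1 α
    have := le_trans (key tr.length le_rfl) (h.trans_eq hb)
    exact hα₁ (le_bot_iff.mp this)
  · exact hα₂ h
end

section
/- Let F be a safe function, P a ground protocol that is F-increasing, (N₁,s₁),…,(Nₙ,sₙ) a valid trace of P from initial knowledge K₀, and α an atom with ¬(⌜K(I)⌝ ⊒ ⌜α⌝). Then for every index 0 ≤ i ≤ n, the intruder knowledge Kᵢ = K₀ ∪ {s₁,…,sᵢ} satisfies F(α, Kᵢ) ⊒ ⌜α⌝ ⊓ F(α, K₀). -/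
/-- Along any valid trace of an `F`-increasing protocol analyzed with a safe function `F`,
the level of an unauthorized atom never drops below `⌜α⌝ ⊓ F(α, K₀)`:
`F(α, Kᵢ) ⊒ ⌜α⌝ ⊓ F(α, K₀)` for every `0 ≤ i ≤ n`. -/
theorem level_maintained_along_trace
    {Atom L : Type} [Countable Atom] [CompleteLattice L]
    (Key : Set Atom) (inv : Atom → Atom)
    (hinv : ∀ k ∈ Key, inv k ∈ Key ∧ inv (inv k) = k)
    (lvl : Atom → L) (KI : L)
    (F : Atom → Set (Msg Atom) → L) (hF : Safe Key inv lvl KI F)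
    (P : Set (Set (Msg Atom) × Msg Atom)) (hPfin : ∀ st ∈ P, st.1.Finite)
    (hInc : Increasing lvl F P)
    (K₀ : Set (Msg Atom)) (tr : List (Set (Msg Atom) × Msg Atom))
    (htr : ValidTrace Key inv P K₀ tr)
    (α : Atom) (hα : ¬ lvl α ≤ KI) :
    ∀ i ≤ tr.length, lvl α ⊓ F α K₀ ≤ F α (knowAfter K₀ tr i) := by
  obtain ⟨⟨hbot, htop, hunion⟩, hfull⟩ := hF
  -- helper: for finite sets, F α S ≥ c if F α {m} ≥ c for each m
  have hfin : ∀ (S : Set (Msg Atom)), S.Finite → ∀ c : L,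
      (∀ m ∈ S, c ≤ F α {m}) → c ≤ F α S := by
    intro S hS
    refine Set.Finite.induction_on (motive := fun S _ => ∀ c : L,
        (∀ m ∈ S, c ≤ F α {m}) → c ≤ F α S) S hS ?_ ?_
    · intro c _
      have : F α (∅ : Set (Msg Atom)) = ⊤ := by
        apply htop; simp [atomsOf]
      simp [this]
    · intro m S _ _ ih c hc
      have : insert m S = {m} ∪ S := by simp
      rw [this, hunion]
      exact le_inf (hc m (by simp)) (ih c fun x hx => hc x (Or.inr hx))
  intro i hi
  induction i with
  | zero =>
    have : knowAfter K₀ tr 0 = K₀ := by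
      simp [knowAfter]
    rw [this]; exact inf_le_right
  | succ i ih =>
    have hi' : i < tr.length := hi
    have IH := ih (le_of_lt hi')
    set s := (tr.get ⟨i, hi'⟩) with hs
    have hopt : tr[i]? = some s := by
      simp [List.getElem?_eq_getElem hi', hs, List.get_eq_getElem]
    have hstep : knowAfter K₀ tr (i + 1) = knowAfter K₀ tr i ∪ {s.2} := by
      ext m
      simp only [knowAfter, Set.mem_union, Set.mem_setOf_eq, Set.mem_singleton_iff,
        List.take_succ, hopt, Option.toList_some, List.mem_append,
        List.mem_singleton]
      constructor
      · rintro (h | ⟨st, (h | rfl), rfl⟩)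
        · exact Or.inl (Or.inl h)
        · exact Or.inl (Or.inr ⟨st, h, rfl⟩)
        · exact Or.inr rfl
      · rintro ((h | ⟨st, h, rfl⟩) | rfl)
        · exact Or.inl h
        · exact Or.inr ⟨st, Or.inl h, rfl⟩
        · exact Or.inr ⟨s, Or.inr rfl, rfl⟩
    rw [hstep, hunion]
    refine le_inf IH ?_
    obtain ⟨hsP, hded⟩ := htr i hi'
    by_cases hαs : α ∈ s.2.atoms
    · -- use increasing + full invariance
      have hNle : F α (knowAfter K₀ tr i) ≤ F α s.1 := by
        apply hfin s.1 (hPfin s hsP)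
        intro m hm
        by_cases hαm : α ∈ m.atoms
        · rcases hfull _ m (hded m hm) α hαm with h | h
          · exact h
          · exact absurd h hα
        · have : F α {m} = ⊤ := by
            apply htop; simpa [atomsOf] using hαm
          simp [this]
      have hincr := hInc s hsP α hαs
      calc lvl α ⊓ F α K₀ ≤ lvl α ⊓ (lvl α ⊓ F α K₀) := le_inf inf_le_left le_rfl
        _ ≤ lvl α ⊓ F α (knowAfter K₀ tr i) := inf_le_inf_left _ IH
        _ ≤ lvl α ⊓ F α s.1 := inf_le_inf_left _ hNle
        _ ≤ F α {s.2} := hincr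
    · have : F α {s.2} = ⊤ := by
        apply htop; simpa [atomsOf] using hαs
      simp [this]
end

section
/- Let F be a safe function, α an atom, and M a set of messages such that F(α, M) ⊒ ⌜α⌝ and ⌜α⌝ ≠ ⊥. If M ⊢ atom α, then ⌜K(I)⌝ ⊒ ⌜α⌝ (the intruder can learn a clear secret whose level is maintained only if the context explicitly authorizes him to know it). -/
/-- If `F` is safe, `F(α, M) ⊒ ⌜α⌝` and `⌜α⌝ ≠ ⊥`, then the intruder can deduce the
clear atom `α` from `M` only if the context authorizes him: `⌜K(I)⌝ ⊒ ⌜α⌝`. -/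
theorem deducible_secret_implies_authorized
    {Atom L : Type} [Countable Atom] [CompleteLattice L]
    (Key : Set Atom) (inv : Atom → Atom)
    (hinv : ∀ k ∈ Key, inv k ∈ Key ∧ inv (inv k) = k)
    (lvl : Atom → L) (KI : L)
    (F : Atom → Set (Msg Atom) → L) (hF : Safe Key inv lvl KI F)
    (α : Atom) (M : Set (Msg Atom))
    (hM : lvl α ≤ F α M) (hα : lvl α ≠ ⊥)
    (hded : Deduces Key inv M (Msg.atom α)) :
    lvl α ≤ KI := by
  rcases hF.2 M _ hded α rfl with h | h
  · exact absurd (le_bot_iff.mp ((hM.trans h).trans_eq (hF.1.1 α))) hα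
  · exact h
end

section
/- Let F be a safe function, α an atom with ¬(⌜K(I)⌝ ⊒ ⌜α⌝), M a set of messages, and M' a finite set of messages each of which is deducible from M (M ⊢ m' for every m' ∈ M'). Then F(α, M ∪ M') = F(α, M): extending the intruder's knowledge by messages he can already deduce does not lower the security level F assigns to an unauthorized atom. -/
/-- Extending the intruder's knowledge by a finite set of messages he can already
deduce does not change the level a safe function assigns to an unauthorized atom:
`F(α, M ∪ M') = F(α, M)`. -/
theorem level_invariant_under_deducible_extension
    {Atom L : Type} [Countable Atom] [CompleteLattice L]
    (Key : Set Atom) (inv : Atom → Atom)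
    (hinv : ∀ k ∈ Key, inv k ∈ Key ∧ inv (inv k) = k)
    (lvl : Atom → L) (KI : L)
    (F : Atom → Set (Msg Atom) → L) (hF : Safe Key inv lvl KI F)
    (α : Atom) (hα : ¬ lvl α ≤ KI)
    (M M' : Set (Msg Atom)) (hM'fin : M'.Finite)
    (hded : ∀ m' ∈ M', Deduces Key inv M m') :
    F α (M ∪ M') = F α M := by
  obtain ⟨⟨hbot, htop, hun⟩, hfi⟩ := hF
  refine Set.Finite.induction_on
    (motive := fun S _ => (∀ m' ∈ S, Deduces Key inv M m') → F α (M ∪ S) = F α M)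
    M' hM'fin ?_ ?_ hded
  · intro _
    have : α ∉ atomsOf (∅ : Set (Msg Atom)) := by simp [atomsOf]
    rw [hun, htop _ _ this, inf_top_eq]
  · intro m S hmS hSfin ih hded'
    have key : F α M ≤ F α {m} := by
      by_cases hmem : α ∈ m.atoms
      · rcases hfi M m (hded' m (Set.mem_insert _ _)) α hmem with h | h
        · exact h
        · exact absurd h hα
      · have : α ∉ atomsOf ({m} : Set (Msg Atom)) := by
          simpa [atomsOf] using hmem
        rw [htop _ _ this]; exact le_top
    have hS : M ∪ insert m S = (M ∪ S) ∪ {m} := by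
      ext x; simp [Set.mem_insert_iff, or_comm, or_assoc, or_left_comm]
    rw [hS, hun, ih (fun m' hm' => hded' m' (Set.mem_insert_of_mem _ hm')),
      inf_eq_left.mpr key]
end

section
/- Binding of a witness function (Proposition on bounding): let F : Atom → Set Msg → L be any function, T a set of messages (the encryption patterns) such that distinct elements of T have pairwise disjoint sets of variables, m ∈ T, σ a substitution, and α an atom, and let W be the witness function for T. Then G_F(α, m, σ) ⊒ W(α, mσ) ⊒ ⊓ { G_F(α, m', σ') : m' ∈ T, σ' a substitution with m'σ' = mσ' }; i.e. the value of the witness function on the valid trace mσ is bounded above by the derivative evaluation on the source (m, σ) and bounded below by the infimum of the derivative evaluations over all patterns unifiable with m, and both bounds are independent of σ. -/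
open scoped Classical in
/-- Homomorphic application `mσ` of a substitution `σ` on the variables `Var`. -/
noncomputable def Msg.subst {Atom : Type} (Var : Set Atom) (σ : Atom → Msg Atom) :
    Msg Atom → Msg Atom
  | .atom a => if a ∈ Var then σ a else .atom a
  | .pair m₁ m₂ => .pair (Msg.subst Var σ m₁) (Msg.subst Var σ m₂)
  | .enc m k => .enc (Msg.subst Var σ m) k

/-- A message is ground if no variable occurs in it. -/
def Ground {Atom : Type} (Var : Set Atom) (m : Msg Atom) : Prop :=
  ∀ a ∈ m.atoms, a ∉ Var

/-- A substitution assigns a ground message to every variable. -/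
def IsSubst {Atom : Type} (Var : Set Atom) (σ : Atom → Msg Atom) : Prop :=
  ∀ X ∈ Var, Ground Var (σ X)

open scoped Classical in
/-- `derivE Var ε S m`: replace in `m` every variable not in `S` by the constant `ε`.
`derivE Var ε ∅ m` is the full derivative `∂m`, and `derivE Var ε {X} m` is `∂[X̄]m`. -/
noncomputable def derivE {Atom : Type} (Var : Set Atom) (ε : Atom) (S : Set Atom) :
    Msg Atom → Msg Atom
  | .atom a => if a ∈ Var ∧ a ∉ S then .atom ε else .atom a
  | .pair m₁ m₂ => .pair (derivE Var ε S m₁) (derivE Var ε S m₂)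
  | .enc m k => .enc (derivE Var ε S m) k

open scoped Classical in
/-- The derivative evaluation `G_F(α, m, σ)`: evaluate `F` on `∂m` if `α` occurs there,
on `∂[X̄]m` if `α` comes from the unique variable `X` of `m` with `σ(X) = atom α`,
and `⊤` otherwise. -/
noncomputable def derivEval {Atom L : Type} [CompleteLattice L]
    (Var : Set Atom) (ε : Atom) (F : Atom → Set (Msg Atom) → L)
    (α : Atom) (m : Msg Atom) (σ : Atom → Msg Atom) : L :=
  if α ∈ (derivE Var ε ∅ m).atoms then F α {derivE Var ε ∅ m}
  else if h : ∃! X, X ∈ Var ∧ X ∈ m.atoms ∧ σ X = Msg.atom α then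
    F h.choose {derivE Var ε {h.choose} m}
  else ⊤

/-- The witness function for the set of patterns `T`, on a ground message `t`:
the meet of the derivative evaluations over all sources `(m', σ')` of `t` in `T`. -/
noncomputable def witness {Atom L : Type} [CompleteLattice L]
    (Var : Set Atom) (ε : Atom) (F : Atom → Set (Msg Atom) → L)
    (T : Set (Msg Atom)) (α : Atom) (t : Msg Atom) : L :=
  sInf { l | ∃ m' ∈ T, ∃ σ', IsSubst Var σ' ∧ Msg.subst Var σ' m' = t ∧
              l = derivEval Var ε F α m' σ' }

lemma subst_congr_aux {Atom : Type} (Var : Set Atom) (σ σ' : Atom → Msg Atom)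
    (m : Msg Atom) (h : ∀ a ∈ m.atoms, a ∈ Var → σ a = σ' a) :
    Msg.subst Var σ m = Msg.subst Var σ' m := by
  classical
  induction m with
  | atom a =>
    simp only [Msg.subst]
    split
    · exact h a rfl ‹_›
    · rfl
  | pair m₁ m₂ ih₁ ih₂ =>
    simp only [Msg.subst]
    rw [ih₁ fun a ha => h a (Or.inl ha), ih₂ fun a ha => h a (Or.inr ha)]
  | enc m k ih =>
    simp only [Msg.subst]
    rw [ih fun a ha => h a (Or.inl ha)]

lemma derivEval_congr_aux {Atom L : Type} [CompleteLattice L]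
    (Var : Set Atom) (ε : Atom) (F : Atom → Set (Msg Atom) → L)
    (α : Atom) (m : Msg Atom) (σ σ' : Atom → Msg Atom)
    (h : ∀ a ∈ m.atoms, a ∈ Var → σ a = σ' a) :
    derivEval Var ε F α m σ = derivEval Var ε F α m σ' := by
  classical
  unfold derivEval
  split
  · rfl
  · have hiff : ∀ X, (X ∈ Var ∧ X ∈ m.atoms ∧ σ X = Msg.atom α) ↔
        (X ∈ Var ∧ X ∈ m.atoms ∧ σ' X = Msg.atom α) := by
      intro X
      constructor
      · rintro ⟨h1, h2, h3⟩; exact ⟨h1, h2, (h X h2 h1) ▸ h3⟩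
      · rintro ⟨h1, h2, h3⟩; exact ⟨h1, h2, (h X h2 h1).symm ▸ h3⟩
    by_cases h1 : ∃! X, X ∈ Var ∧ X ∈ m.atoms ∧ σ X = Msg.atom α
    · have h2 : ∃! X, X ∈ Var ∧ X ∈ m.atoms ∧ σ' X = Msg.atom α :=
        (existsUnique_congr hiff).mp h1
      rw [dif_pos h1, dif_pos h2]
      have hc : h1.choose = h2.choose :=
        h2.unique ((hiff _).mp h1.choose_spec.1) h2.choose_spec.1
      rw [hc]
    · have h2 : ¬ ∃! X, X ∈ Var ∧ X ∈ m.atoms ∧ σ' X = Msg.atom α :=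
        fun h2 => h1 ((existsUnique_congr hiff).mpr h2)
      rw [dif_neg h1, dif_neg h2]

/-- **Binding a witness function.** For a pattern `m ∈ T` and a substitution `σ`,
the value of the witness function on the valid trace `mσ` is bounded above by the
derivative evaluation `G_F(α, m, σ)` on its source, and bounded below by the meet of
the derivative evaluations over all patterns of `T` unifiable with `m`. -/
theorem binding_witness_function
    {Atom L : Type} [Countable Atom] [CompleteLattice L]
    (Var Key : Set Atom) (hVK : Disjoint Var Key)
    (ε : Atom) (hε : ε ∉ Var ∪ Key)
    (F : Atom → Set (Msg Atom) → L)
    (T : Set (Msg Atom))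
    (hT : ∀ m₁ ∈ T, ∀ m₂ ∈ T, m₁ ≠ m₂ → Disjoint (m₁.atoms ∩ Var) (m₂.atoms ∩ Var))
    (m : Msg Atom) (hm : m ∈ T)
    (σ : Atom → Msg Atom) (hσ : IsSubst Var σ) (α : Atom) :
    witness Var ε F T α (Msg.subst Var σ m) ≤ derivEval Var ε F α m σ ∧
    sInf { l | ∃ m' ∈ T, ∃ σ', IsSubst Var σ' ∧
            Msg.subst Var σ' m' = Msg.subst Var σ' m ∧
            l = derivEval Var ε F α m' σ' }
      ≤ witness Var ε F T α (Msg.subst Var σ m) := by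
  classical
  constructor
  · exact sInf_le ⟨m, hm, σ, hσ, rfl, rfl⟩
  · apply sInf_le_sInf
    rintro l ⟨m', hm', σ', hσ', heq, rfl⟩
    set σ'' : Atom → Msg Atom := fun X => if X ∈ m'.atoms then σ' X else σ X with hσ''def
    have hagree' : ∀ a ∈ m'.atoms, a ∈ Var → σ'' a = σ' a := by
      intro a ha _; simp [hσ''def, ha]
    refine ⟨m', hm', σ'', ?_, ?_, ?_⟩
    · intro X hX
      simp only [hσ''def]
      split
      · exact hσ' X hX
      · exact hσ X hX
    · by_cases hmm : m' = m
      · subst hmm; rfl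
      · have hagree : ∀ a ∈ m.atoms, a ∈ Var → σ'' a = σ a := by
          intro a ha hav
          have hdisj := hT m' hm' m hm hmm
          have : a ∉ m'.atoms := by
            intro ha'
            exact (hdisj.ne_of_mem ⟨ha', hav⟩ ⟨ha, hav⟩) rfl
          simp [hσ''def, this]
        rw [subst_congr_aux Var σ'' σ' m' hagree',
          subst_congr_aux Var σ'' σ m hagree, heq]
    · exact (derivEval_congr_aux Var ε F α m' σ'' σ' hagree').symm
end
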